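/- If G is a connected graph with diameter 2 and x ∈ V(G) is such that G−x is connected, then μ(G−x) ≤ μ(G), where μ is the mutual-visibility number. -/

import Mathlib

open SimpleGraph

/-- `u` and `v` are `X`-visible in `G`: there is a shortest `u,v`-walk whose
vertices meet `X` only possibly in `u` and `v`. -/
def IsMVisible {V : Type*} (G : SimpleGraph V) (X : Set V) (u v : V) : Prop :=
  ∃ P : G.Walk u v, P.length = G.dist u v ∧
    ∀ w ∈ P.support, w ∈ X → w = u ∨ w = v

/-- mutual-visibility set -/
def IsMVSet {V : Type*} (G : SimpleGraph V) (X : Set V) : Prop :=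
  ∀ u ∈ X, ∀ v ∈ X, IsMVisible G X u v

/-- outer mutual-visibility set -/
def IsOuterMVSet {V : Type*} (G : SimpleGraph V) (X : Set V) : Prop :=
  ∀ u ∈ X, ∀ v : V, IsMVisible G X u v

/-- dual mutual-visibility set -/
def IsDualMVSet {V : Type*} (G : SimpleGraph V) (X : Set V) : Prop :=
  (∀ u ∈ X, ∀ v ∈ X, IsMVisible G X u v) ∧
  (∀ u ∉ X, ∀ v ∉ X, IsMVisible G X u v)

/-- total mutual-visibility set -/
def IsTotalMVSet {V : Type*} (G : SimpleGraph V) (X : Set V) : Prop :=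
  ∀ u v : V, IsMVisible G X u v

/-- the mutual-visibility number μ(G) -/
noncomputable def mu {V : Type*} (G : SimpleGraph V) : ℕ :=
  sSup {n | ∃ X : Set V, IsMVSet G X ∧ X.ncard = n}

/-- the outer mutual-visibility number μₒ(G) -/
noncomputable def muO {V : Type*} (G : SimpleGraph V) : ℕ :=
  sSup {n | ∃ X : Set V, IsOuterMVSet G X ∧ X.ncard = n}

/-- the dual mutual-visibility number μ_d(G) -/
noncomputable def muD {V : Type*} (G : SimpleGraph V) : ℕ :=
  sSup {n | ∃ X : Set V, IsDualMVSet G X ∧ X.ncard = n}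

/-- the total mutual-visibility number μ_t(G) -/
noncomputable def muT {V : Type*} (G : SimpleGraph V) : ℕ :=
  sSup {n | ∃ X : Set V, IsTotalMVSet G X ∧ X.ncard = n}

lemma exists_mid_of_length_two {V : Type*} {G : SimpleGraph V} {u v : V}
    (p : G.Walk u v) (hp : p.length = 2) : ∃ w, G.Adj u w ∧ G.Adj w v := by
  cases p with
  | nil => simp at hp
  | cons h1 q =>
    cases q with
    | nil => simp at hp
    | cons h2 r =>
      cases r with
      | nil => exact ⟨_, h1, h2⟩
      | cons _ _ => simp at hp

theorem stmt_10 {V : Type*} [Fintype V] (G : SimpleGraph V) (hG : G.Connected)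
    (hdiam : G.diam = 2)
    (x : V) (hconn : (G.induce {v | v ≠ x}).Connected) :
    mu (G.induce {v | v ≠ x}) ≤ mu G := by
  classical
  set S : Set V := {v | v ≠ x} with hS
  set G' := G.induce S with hG'
  -- ediam ≠ ⊤
  have hediam : G.ediam ≠ ⊤ := by
    intro h
    rw [SimpleGraph.diam, h] at hdiam
    simp at hdiam
  -- the target set is bounded above
  have hbdd : BddAbove {n | ∃ X : Set V, IsMVSet G X ∧ X.ncard = n} := by
    refine ⟨Fintype.card V, ?_⟩
    rintro n ⟨X, -, rfl⟩
    have := Set.ncard_le_ncard (Set.subset_univ X) Set.finite_univ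
    simpa [Set.ncard_univ, Nat.card_eq_fintype_card] using this
  have hne : {n | ∃ X : Set ↥S, IsMVSet G' X ∧ X.ncard = n}.Nonempty := by
    exact ⟨0, ∅, fun u hu => absurd hu (Set.notMem_empty u), by simp⟩
  refine csSup_le_csSup hbdd hne ?_
  rintro n ⟨X, hX, rfl⟩
  refine ⟨Subtype.val '' X, ?_, Set.ncard_image_of_injective X Subtype.val_injective⟩
  rintro u ⟨a, haX, rfl⟩ v ⟨b, hbX, rfl⟩
  obtain ⟨P, hPlen, hPsup⟩ := hX a haX b hbX
  let f : G' ↪g G := SimpleGraph.Embedding.induce S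
  let Q := P.map f.toHom
  have hQlen : Q.length = P.length := SimpleGraph.Walk.length_map _ _
  have hle : G.dist ↑a ↑b ≤ G'.dist a b := by
    calc G.dist ↑a ↑b ≤ Q.length := SimpleGraph.dist_le Q
    _ = G'.dist a b := by rw [hQlen, hPlen]
  rcases eq_or_lt_of_le hle with heq | hlt
  · refine ⟨Q, by exact hQlen.trans (hPlen.trans heq.symm), ?_⟩
    intro w hw hwY
    have hw : w ∈ (P.map f.toHom).support := hw
    rw [SimpleGraph.Walk.support_map] at hw
    obtain ⟨c, hc, hcw⟩ := List.mem_map.mp hw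
    obtain ⟨d, hd, hdw⟩ := hwY
    have hcd : c = d := Subtype.val_injective (by
      show (c : V) = d; rw [show ((c : V)) = w from hcw, ← hdw])
    rcases hPsup c hc (hcd ▸ hd) with h | h
    · left; rw [← hcw, h]; rfl
    · right; rw [← hcw, h]; rfl
  · -- G.dist < G'.dist
    have hab : a ≠ b := by
      rintro rfl
      have h0 : G'.dist a a = 0 := SimpleGraph.dist_self
      omega
    have hvab : (a : V) ≠ (b : V) := fun h => hab (Subtype.val_injective h)
    have hpos : 0 < G.dist ↑a ↑b := hG.pos_dist_of_ne hvab
    have hle2 : G.dist ↑a ↑b ≤ 2 := hdiam ▸ SimpleGraph.dist_le_diam hediam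
    interval_cases hdd : G.dist (a : V) (b : V)
    · -- dist = 1 : adjacent, contradiction
      exfalso
      have hadj : G.Adj ↑a ↑b := SimpleGraph.dist_eq_one_iff_adj.mp hdd
      have hadj' : G'.Adj a b := hadj
      have : G'.dist a b ≤ 1 :=
        le_of_eq (SimpleGraph.dist_eq_one_iff_adj.mpr hadj')
      omega
    · -- dist = 2
      obtain ⟨R, hR⟩ := hG.exists_walk_length_eq_dist (a : V) (b : V)
      rw [hdd] at hR
      obtain ⟨w, h1, h2⟩ := exists_mid_of_length_two R hR
      have hwY : w ∉ Subtype.val '' X := by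
        rintro ⟨c, hcX, rfl⟩
        have h1' : G'.Adj a c := h1
        have h2' : G'.Adj c b := h2
        have : G'.dist a b ≤ 2 :=
          SimpleGraph.dist_le (SimpleGraph.Walk.cons h1'
            (SimpleGraph.Walk.cons h2' SimpleGraph.Walk.nil))
        omega
      refine ⟨SimpleGraph.Walk.cons h1 (SimpleGraph.Walk.cons h2 SimpleGraph.Walk.nil),
        by simp [hdd], ?_⟩
      intro z hz hzY
      simp [SimpleGraph.Walk.support_cons] at hz
      rcases hz with rfl | rfl | rfl
      · exact Or.inl rfl
      · exact absurd hzY hwY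
      · exact Or.inr rfl
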